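/- Let R be a commutative ring, n a positive integer, σ : ℤⁿ → Aut(R) a group homomorphism, and t₁, …, tₙ units of R fixed to satisfy: (1) σ_i σ_j(t_i t_j) = μ_{ij} μ_{ji} σ_i(t_i) σ_j(t_j) for all i ≠ j, and (2) t_j σ_i σ_k(t_j) = σ_i(t_j) σ_k(t_j) for all pairwise distinct i, j, k, where μ_{ij} are units of R fixed by all σ_g. Define τ_{ij} = μ_{ji} σ_j(t_j) (σ_i σ_j(t_j))⁻¹ for i ≠ j. Then τ_{ij} τ_{ji} = 1 for all i ≠ j, and σ_k(τ_{ij}) = τ_{ij} for all pairwise distinct i, j, k. -/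
import Mathlib


/-- `σᵢ := σ(eᵢ)` for the standard basis of `ℤⁿ`. -/
def sigmaGen {R : Type*} [CommRing R] {n : ℕ}
    (σ : Multiplicative (Fin n → ℤ) →* RingAut R) (i : Fin n) : RingAut R :=
  σ (Multiplicative.ofAdd (Pi.single i 1))

/-- `τᵢⱼ = μⱼᵢ σⱼ(tⱼ) (σᵢσⱼ(tⱼ))⁻¹`. -/
noncomputable def tauElt {R : Type*} [CommRing R] {n : ℕ}
    (σ : Multiplicative (Fin n → ℤ) →* RingAut R)
    (t : Fin n → Rˣ) (μ : Fin n → Fin n → Rˣ) (i j : Fin n) : R :=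
  (μ j i : R) * sigmaGen σ j (t j : R) *
    Ring.inverse (sigmaGen σ i (sigmaGen σ j (t j : R)))

lemma sigmaGen_comm {R : Type*} [CommRing R] {n : ℕ}
    (σ : Multiplicative (Fin n → ℤ) →* RingAut R) (i j : Fin n) (x : R) :
    sigmaGen σ i (sigmaGen σ j x) = sigmaGen σ j (sigmaGen σ i x) := by
  have h : sigmaGen σ i * sigmaGen σ j = sigmaGen σ j * sigmaGen σ i := by
    unfold sigmaGen
    rw [← map_mul σ, ← map_mul σ, mul_comm]
  have h2 : (sigmaGen σ i * sigmaGen σ j) x = (sigmaGen σ j * sigmaGen σ i) x := by rw [h]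
  exact h2

lemma isUnit_sigmaGen {R : Type*} [CommRing R] {n : ℕ}
    (σ : Multiplicative (Fin n → ℤ) →* RingAut R) (i : Fin n) {x : R} (hx : IsUnit x) :
    IsUnit (sigmaGen σ i x) := hx.map _

lemma inverse_map {R : Type*} [CommRing R] (e : RingAut R) (x : R) :
    Ring.inverse (e x) = e (Ring.inverse x) := by
  by_cases hx : IsUnit x
  · obtain ⟨u, rfl⟩ := hx
    rw [Ring.inverse_unit]
    have h1 : e (u : R) = ((Units.map (e.toRingHom.toMonoidHom) u : Rˣ) : R) := rfl
    rw [h1, Ring.inverse_unit, Units.coe_map_inv]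
    rfl
  · rw [Ring.inverse_non_unit _ hx, Ring.inverse_non_unit, map_zero]
    intro h
    exact hx (by simpa using h.map e.symm)

/-- Under the two TGWA consistency conditions, the elements
`τᵢⱼ = μⱼᵢ σⱼ(tⱼ)(σᵢσⱼ(tⱼ))⁻¹` satisfy `τᵢⱼτⱼᵢ = 1` for `i ≠ j` and are fixed by `σₖ`
for pairwise distinct `i, j, k`. -/
theorem stmt8 {R : Type*} [CommRing R] {n : ℕ} (hn : 0 < n)
    (σ : Multiplicative (Fin n → ℤ) →* RingAut R)
    (t : Fin n → Rˣ) (μ : Fin n → Fin n → Rˣ)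
    (hμfix : ∀ (g : Multiplicative (Fin n → ℤ)) (i j : Fin n), i ≠ j →
      σ g (μ i j : R) = (μ i j : R))
    (h1 : ∀ i j : Fin n, i ≠ j →
      sigmaGen σ i (sigmaGen σ j ((t i : R) * (t j : R)))
        = (μ i j : R) * (μ j i : R) * (sigmaGen σ i (t i : R) * sigmaGen σ j (t j : R)))
    (h2 : ∀ i j k : Fin n, i ≠ j → j ≠ k → i ≠ k →
      (t j : R) * sigmaGen σ i (sigmaGen σ k (t j : R))
        = sigmaGen σ i (t j : R) * sigmaGen σ k (t j : R)) :
    (∀ i j : Fin n, i ≠ j → tauElt σ t μ i j * tauElt σ t μ j i = 1) ∧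
    (∀ i j k : Fin n, i ≠ j → j ≠ k → i ≠ k →
      sigmaGen σ k (tauElt σ t μ i j) = tauElt σ t μ i j) := by
  constructor
  · intro i j hij
    unfold tauElt
    have hA : IsUnit (sigmaGen σ i (sigmaGen σ j (t j : R))) :=
      isUnit_sigmaGen σ i (isUnit_sigmaGen σ j (t j).isUnit)
    have hB : IsUnit (sigmaGen σ j (sigmaGen σ i (t i : R))) :=
      isUnit_sigmaGen σ j (isUnit_sigmaGen σ i (t i).isUnit)
    have hAB : sigmaGen σ i (sigmaGen σ j (t j : R)) * sigmaGen σ j (sigmaGen σ i (t i : R))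
        = (μ i j : R) * (μ j i : R) * (sigmaGen σ i (t i : R) * sigmaGen σ j (t j : R)) := by
      have h := h1 i j hij
      rw [map_mul, map_mul] at h
      rw [← h, sigmaGen_comm σ j i (t i : R)]
      ring
    calc (μ j i : R) * sigmaGen σ j (t j : R)
          * Ring.inverse (sigmaGen σ i (sigmaGen σ j (t j : R)))
          * ((μ i j : R) * sigmaGen σ i (t i : R)
            * Ring.inverse (sigmaGen σ j (sigmaGen σ i (t i : R))))
        = ((μ i j : R) * (μ j i : R) * (sigmaGen σ i (t i : R) * sigmaGen σ j (t j : R)))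
          * (Ring.inverse (sigmaGen σ j (sigmaGen σ i (t i : R)))
            * Ring.inverse (sigmaGen σ i (sigmaGen σ j (t j : R)))) := by ring
      _ = (sigmaGen σ i (sigmaGen σ j (t j : R)) * sigmaGen σ j (sigmaGen σ i (t i : R)))
          * Ring.inverse (sigmaGen σ i (sigmaGen σ j (t j : R))
            * sigmaGen σ j (sigmaGen σ i (t i : R))) := by
            rw [Ring.mul_inverse_rev, hAB]
      _ = 1 := Ring.mul_inverse_cancel _ (hA.mul hB)
  · intro i j k hij hjk hik
    unfold tauElt
    set C := sigmaGen σ i (sigmaGen σ j (t j : R)) with hCdef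
    have hC : IsUnit C := isUnit_sigmaGen σ i (isUnit_sigmaGen σ j (t j).isUnit)
    have hD : IsUnit (sigmaGen σ k C) := isUnit_sigmaGen σ k hC
    have key : sigmaGen σ j (t j : R) * sigmaGen σ k C
        = C * sigmaGen σ k (sigmaGen σ j (t j : R)) := by
      have h := congrArg (sigmaGen σ j) (h2 i j k hij hjk hik)
      rw [map_mul, map_mul] at h
      rw [hCdef]
      calc sigmaGen σ j (t j : R) * sigmaGen σ k (sigmaGen σ i (sigmaGen σ j (t j : R)))
          = sigmaGen σ j (t j : R)
            * sigmaGen σ j (sigmaGen σ i (sigmaGen σ k (t j : R))) := by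
              rw [sigmaGen_comm σ i j (t j : R), sigmaGen_comm σ k j, sigmaGen_comm σ k i]
        _ = sigmaGen σ j (sigmaGen σ i (t j : R)) * sigmaGen σ j (sigmaGen σ k (t j : R)) := h
        _ = sigmaGen σ i (sigmaGen σ j (t j : R)) * sigmaGen σ k (sigmaGen σ j (t j : R)) := by
              rw [sigmaGen_comm σ j i, sigmaGen_comm σ j k]
    have e1 : Ring.inverse (sigmaGen σ k C) * sigmaGen σ k C = 1 :=
      Ring.inverse_mul_cancel _ hD
    have e2 : Ring.inverse C * C = 1 := Ring.inverse_mul_cancel _ hC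
    rw [map_mul, map_mul,
      show (sigmaGen σ k) ((μ j i : R)) = (μ j i : R) from hμfix _ j i hij.symm,
      ← inverse_map]
    refine (hC.mul hD).mul_right_cancel ?_
    calc (μ j i : R) * sigmaGen σ k (sigmaGen σ j (t j : R)) * Ring.inverse (sigmaGen σ k C)
          * (C * sigmaGen σ k C)
        = (μ j i : R) * (C * sigmaGen σ k (sigmaGen σ j (t j : R)))
          * (Ring.inverse (sigmaGen σ k C) * sigmaGen σ k C) := by ring
      _ = (μ j i : R) * (sigmaGen σ j (t j : R) * sigmaGen σ k C) * (Ring.inverse C * C) := by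
          rw [e1, e2, key]
      _ = (μ j i : R) * sigmaGen σ j (t j : R) * Ring.inverse C * (C * sigmaGen σ k C) := by
          ring
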